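/- arXiv:0705.1487 — 2 statements merged into one kernel-verified Lean document; each statement's English description precedes it below -/
import Mathlib

section
/- The group presented by ⟨a,b,c ∣ [a⁻¹,c] = 1, bcb⁻¹ca⁻² = 1, ba⁻¹b⁻¹a³c⁻¹ = 1⟩ is isomorphic to the semidirect product ℤ ⋉_A ℤ² where A = [[3,1],[-2,-1]]. -/
open Matrix

/-- The additive automorphism of `ℤ²` induced by a matrix in `GL(2,ℤ)`. -/
def glAddEquiv (A : GL (Fin 2) ℤ) : (Fin 2 → ℤ) ≃+ (Fin 2 → ℤ) where
  toFun v := Matrix.mulVec (A : Matrix (Fin 2) (Fin 2) ℤ) v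
  invFun v := Matrix.mulVec ((A⁻¹ : GL (Fin 2) ℤ) : Matrix (Fin 2) (Fin 2) ℤ) v
  left_inv v := by
    show Matrix.mulVec _ (Matrix.mulVec _ v) = v
    rw [Matrix.mulVec_mulVec, ← Matrix.GeneralLinearGroup.coe_mul, inv_mul_cancel]
    simp
  right_inv v := by
    show Matrix.mulVec _ (Matrix.mulVec _ v) = v
    rw [Matrix.mulVec_mulVec, ← Matrix.GeneralLinearGroup.coe_mul, mul_inv_cancel]
    simp
  map_add' x y := by
    show Matrix.mulVec _ (x+y) = _
    rw [Matrix.mulVec_add]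

/-- The action of `ℤ` on `ℤ²` where `1` acts by the matrix `A`. -/
def glZAction (A : GL (Fin 2) ℤ) :
    Multiplicative ℤ →* MulAut (Multiplicative (Fin 2 → ℤ)) :=
  zpowersHom _ (AddEquiv.toMultiplicative (glAddEquiv A))

/-- The semidirect product `ℤ ⋉_A ℤ²`. -/
def ZSemidirect (A : GL (Fin 2) ℤ) : Type :=
  SemidirectProduct (Multiplicative (Fin 2 → ℤ)) (Multiplicative ℤ) (glZAction A)

instance (A : GL (Fin 2) ℤ) : Group (ZSemidirect A) :=
  inferInstanceAs (Group (SemidirectProduct _ _ (glZAction A)))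

namespace Stmt9

def a : FreeGroup (Fin 3) := FreeGroup.of 0
def b : FreeGroup (Fin 3) := FreeGroup.of 1
def c : FreeGroup (Fin 3) := FreeGroup.of 2

/-- relators; the first one is the commutator [a⁻¹, c] = a⁻¹ * c * a * c⁻¹ -/
def rels : Set (FreeGroup (Fin 3)) :=
  {a⁻¹ * c * a * c⁻¹, b * c * b⁻¹ * c * (a ^ 2)⁻¹, b * a⁻¹ * b⁻¹ * a ^ 3 * c⁻¹}

-- ==================== auxiliary development ====================

/-- abbreviation for the semidirect product as a `SemidirectProduct`. -/
abbrev Gsd (A : GL (Fin 2) ℤ) : Type :=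
  SemidirectProduct (Multiplicative (Fin 2 → ℤ)) (Multiplicative ℤ) (glZAction A)

abbrev P : Type := PresentedGroup rels

noncomputable def X : P := PresentedGroup.of 0
noncomputable def B : P := PresentedGroup.of 1
noncomputable def Y : P := PresentedGroup.of 2

lemma mk_rel_one {r : FreeGroup (Fin 3)} (hr : r ∈ rels) :
    PresentedGroup.mk rels r = 1 :=
  (QuotientGroup.eq_one_iff r).2 (Subgroup.subset_normalClosure hr)

lemma rel1 : X * Y = Y * X := by
  have h := mk_rel_one (r := a⁻¹ * c * a * c⁻¹) (by left; rfl)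
  simp only [_root_.map_mul, map_inv] at h
  have h2 : (X⁻¹ * Y * X * Y⁻¹ : P) = 1 := h
  rw [mul_inv_eq_one] at h2
  calc X * Y = X * (X⁻¹ * Y * X) := by rw [h2]
    _ = Y * X := by group

lemma commXY : Commute X Y := rel1

lemma rel2 : B * Y * B⁻¹ = X ^ (2:ℤ) * Y ^ (-1:ℤ) := by
  have h := mk_rel_one (r := b * c * b⁻¹ * c * (a ^ 2)⁻¹) (by right; left; rfl)
  simp only [_root_.map_mul, map_inv, map_pow] at h
  have h' : (B * Y * B⁻¹ * Y * (X ^ (2:ℕ))⁻¹ : P) = 1 := h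
  have h2 : (B * Y * B⁻¹ : P) = X ^ (2:ℕ) * Y⁻¹ := by
    rw [mul_inv_eq_one] at h'
    calc B * Y * B⁻¹ = (B * Y * B⁻¹ * Y) * Y⁻¹ := by group
      _ = X ^ (2:ℕ) * Y⁻¹ := by rw [h']
  rw [h2, show ((2:ℤ):ℤ) = ((2:ℕ):ℤ) by norm_num, zpow_natCast,
    show Y ^ (-1:ℤ) = Y⁻¹ by group]

lemma rel3 : B * X * B⁻¹ = X ^ (3:ℤ) * Y ^ (-1:ℤ) := by
  have h := mk_rel_one (r := b * a⁻¹ * b⁻¹ * a ^ 3 * c⁻¹) (by right; right; rfl)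
  simp only [_root_.map_mul, map_inv, map_pow] at h
  have h' : (B * X⁻¹ * B⁻¹ * X ^ (3:ℕ) * Y⁻¹ : P) = 1 := h
  have h2 : (B * X⁻¹ * B⁻¹ : P) = Y * (X ^ (3:ℕ))⁻¹ := by
    calc B * X⁻¹ * B⁻¹ = (B * X⁻¹ * B⁻¹ * X ^ (3:ℕ) * Y⁻¹) * (Y * (X ^ (3:ℕ))⁻¹) := by group
      _ = Y * (X ^ (3:ℕ))⁻¹ := by rw [h']; group
  have h3 : B * X * B⁻¹ = (B * X⁻¹ * B⁻¹)⁻¹ := by group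
  rw [h3, h2, show Y ^ (-1:ℤ) = Y⁻¹ by group,
    show X ^ (3:ℤ) = X ^ (3:ℕ) by norm_cast]
  group

lemma mulXY (m n m' n' : ℤ) :
    (X ^ m * Y ^ n) * (X ^ m' * Y ^ n') = X ^ (m + m') * Y ^ (n + n') := by
  have hc : Commute (X ^ m') (Y ^ n) := commXY.zpow_zpow m' n
  rw [_root_.zpow_add, _root_.zpow_add]
  calc X ^ m * Y ^ n * (X ^ m' * Y ^ n')
      = X ^ m * (Y ^ n * X ^ m') * Y ^ n' := by group
    _ = X ^ m * (X ^ m' * Y ^ n) * Y ^ n' := by rw [hc.eq]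
    _ = X ^ m * X ^ m' * (Y ^ n * Y ^ n') := by group

lemma conjP (m n : ℤ) :
    B * (X ^ m * Y ^ n) * B⁻¹ = X ^ (3 * m + 2 * n) * Y ^ (-m - n) := by
  have h1 : B * (X ^ m * Y ^ n) * B⁻¹ = (B * X * B⁻¹) ^ m * (B * Y * B⁻¹) ^ n := by
    have := _root_.map_mul (MulAut.conj B) (X ^ m) (Y ^ n)
    rw [map_zpow, map_zpow] at this
    simpa [MulAut.conj_apply, mul_assoc] using this
  have hc3 : Commute (X ^ (3:ℤ)) (Y ^ (-1:ℤ)) := commXY.zpow_zpow 3 (-1)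
  have hc2 : Commute (X ^ (2:ℤ)) (Y ^ (-1:ℤ)) := commXY.zpow_zpow 2 (-1)
  rw [h1, rel3, rel2, hc3.mul_zpow, hc2.mul_zpow, ← _root_.zpow_mul, ← _root_.zpow_mul,
    ← _root_.zpow_mul, ← _root_.zpow_mul, mulXY]
  congr 1 <;> ring_nf

/-- the homomorphism `ℤ² → P`, sending `v` to `X^(4 v₀ + v₁) Y^(-v₀)`. -/
noncomputable def F1 : Multiplicative (Fin 2 → ℤ) →* P where
  toFun v := X ^ (4 * Multiplicative.toAdd v 0 + Multiplicative.toAdd v 1) *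
    Y ^ (-(Multiplicative.toAdd v 0))
  map_one' := by simp
  map_mul' v w := by
    show X ^ _ * Y ^ _ = (X ^ _ * Y ^ _) * (X ^ _ * Y ^ _)
    rw [mulXY]
    have h0 : Multiplicative.toAdd (v * w) 0 =
        Multiplicative.toAdd v 0 + Multiplicative.toAdd w 0 := rfl
    have h1 : Multiplicative.toAdd (v * w) 1 =
        Multiplicative.toAdd v 1 + Multiplicative.toAdd w 1 := rfl
    rw [h0, h1]
    congr 1 <;> · congr 1; ring

noncomputable def F2 : Multiplicative ℤ →* P := zpowersHom P B

lemma F1_ofAdd (v : Fin 2 → ℤ) :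
    F1 (Multiplicative.ofAdd v) = X ^ (4 * v 0 + v 1) * Y ^ (-(v 0)) := rfl

section WithA

variable (A : GL (Fin 2) ℤ)

lemma key1 (hA : (A : Matrix (Fin 2) (Fin 2) ℤ) = !![3, 1; -2, -1])
    (x : Multiplicative (Fin 2 → ℤ)) :
    F1 (AddEquiv.toMultiplicative (glAddEquiv A) x) = B * F1 x * B⁻¹ := by
  set v : Fin 2 → ℤ := Multiplicative.toAdd x with hvdef
  have hF : AddEquiv.toMultiplicative (glAddEquiv A) x =
      Multiplicative.ofAdd (Matrix.mulVec (A : Matrix (Fin 2) (Fin 2) ℤ) v) := rfl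
  have hv : Matrix.mulVec (A : Matrix (Fin 2) (Fin 2) ℤ) v =
      ![3 * v 0 + v 1, -2 * v 0 - v 1] := by
    rw [hA]; funext i; fin_cases i <;>
      simp [Matrix.mulVec, dotProduct, Fin.sum_univ_two] <;> ring
  have hx : x = Multiplicative.ofAdd v := rfl
  rw [hF, hv, hx, F1_ofAdd, F1_ofAdd, conjP]
  simp only [Matrix.cons_val_zero, Matrix.cons_val_one, Matrix.head_cons]
  congr 1
  · congr 1; ring
  · congr 1; ring

lemma key_all (hA : (A : Matrix (Fin 2) (Fin 2) ℤ) = !![3, 1; -2, -1]) (n : ℤ) :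
    ∀ x, F1 ((AddEquiv.toMultiplicative (glAddEquiv A) ^ n) x) = B ^ n * F1 x * (B ^ n)⁻¹ := by
  have key1' : ∀ x, F1 ((AddEquiv.toMultiplicative (glAddEquiv A))⁻¹ x)
      = B⁻¹ * F1 x * B := by
    intro x
    have h := key1 A hA ((AddEquiv.toMultiplicative (glAddEquiv A))⁻¹ x)
    rw [MulAut.inv_def, MulEquiv.apply_symm_apply] at h
    rw [← MulAut.inv_def] at h
    rw [h]
    group
  induction n using Int.induction_on with
  | zero => simp
  | succ k ih =>
    intro x
    rw [_root_.zpow_add_one, MulAut.mul_apply, ih, key1 A hA]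
    group
  | pred k ih =>
    intro x
    rw [_root_.zpow_sub_one, MulAut.mul_apply, ih, key1']
    group

/-- the homomorphism from the semidirect product to `P`. -/
noncomputable def gHom (hA : (A : Matrix (Fin 2) (Fin 2) ℤ) = !![3, 1; -2, -1]) :
    Gsd A →* P :=
  SemidirectProduct.lift F1 F2 (by
    intro g
    refine MonoidHom.ext fun x => ?_
    simp only [MonoidHom.comp_apply, MulEquiv.coe_toMonoidHom, MulAut.conj_apply]
    have : glZAction A g = (AddEquiv.toMultiplicative (glAddEquiv A)) ^ (Multiplicative.toAdd g) :=
      rfl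
    rw [this, key_all A hA]
    rfl)

open SemidirectProduct in
/-- images of the generators in the semidirect product. -/
def fvec : Fin 3 → Gsd A :=
  ![inl (Multiplicative.ofAdd ![0, 1]),
    inr (Multiplicative.ofAdd 1),
    inl (Multiplicative.ofAdd ![-1, 4])]

lemma inl_mul' (x y : Fin 2 → ℤ) :
    (SemidirectProduct.inl (Multiplicative.ofAdd x) : Gsd A) *
      SemidirectProduct.inl (Multiplicative.ofAdd y) =
    SemidirectProduct.inl (Multiplicative.ofAdd (x + y)) := by
  rw [← _root_.map_mul]; rfl

lemma inl_inv' (x : Fin 2 → ℤ) :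
    (SemidirectProduct.inl (Multiplicative.ofAdd x) : Gsd A)⁻¹ =
    SemidirectProduct.inl (Multiplicative.ofAdd (-x)) := by
  rw [← map_inv]; rfl

lemma inl_zpow' (x : Fin 2 → ℤ) (m : ℤ) :
    (SemidirectProduct.inl (Multiplicative.ofAdd x) : Gsd A) ^ m =
    SemidirectProduct.inl (Multiplicative.ofAdd (m • x)) := by
  rw [← map_zpow, ofAdd_zsmul]

lemma conjG (hA : (A : Matrix (Fin 2) (Fin 2) ℤ) = !![3, 1; -2, -1]) (v : Fin 2 → ℤ) :
    (SemidirectProduct.inr (Multiplicative.ofAdd (1:ℤ)) : Gsd A) *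
      SemidirectProduct.inl (Multiplicative.ofAdd v) *
      (SemidirectProduct.inr (Multiplicative.ofAdd (1:ℤ)))⁻¹ =
    SemidirectProduct.inl (Multiplicative.ofAdd (Matrix.mulVec !![3,1;-2,-1] v)) := by
  have h := SemidirectProduct.inl_aut (φ := glZAction A) (Multiplicative.ofAdd (1:ℤ))
    (Multiplicative.ofAdd v)
  rw [map_inv] at h
  rw [← h]
  congr 1
  have h2 : glZAction A (Multiplicative.ofAdd (1:ℤ)) =
      AddEquiv.toMultiplicative (glAddEquiv A) := by
    rw [glZAction, zpowersHom_apply, toAdd_ofAdd, zpow_one]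
  rw [h2]
  show Multiplicative.ofAdd (Matrix.mulVec ((A : Matrix (Fin 2) (Fin 2) ℤ)) v) = _
  rw [hA]

lemma lift_rels (hA : (A : Matrix (Fin 2) (Fin 2) ℤ) = !![3, 1; -2, -1]) :
    ∀ r ∈ rels, FreeGroup.lift (fvec A) r = 1 := by
  have ha : FreeGroup.lift (fvec A) a =
      SemidirectProduct.inl (Multiplicative.ofAdd ![0, 1]) := by
    rw [Stmt9.a, FreeGroup.lift_apply_of]; rfl
  have hb : FreeGroup.lift (fvec A) b =
      SemidirectProduct.inr (Multiplicative.ofAdd (1:ℤ)) := by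
    rw [Stmt9.b, FreeGroup.lift_apply_of]; rfl
  have hc : FreeGroup.lift (fvec A) c =
      SemidirectProduct.inl (Multiplicative.ofAdd ![-1, 4]) := by
    rw [Stmt9.c, FreeGroup.lift_apply_of]; rfl
  have hone : ∀ w : Fin 2 → ℤ, w = 0 →
      (SemidirectProduct.inl (Multiplicative.ofAdd w) : Gsd A) = 1 := by
    intro w hw; rw [hw]; rfl
  intro r hr
  simp only [rels, Set.mem_insert_iff, Set.mem_singleton_iff] at hr
  rcases hr with rfl | rfl | rfl
  · rw [_root_.map_mul, _root_.map_mul, _root_.map_mul, map_inv, map_inv, ha, hc,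
      inl_inv', inl_inv', inl_mul', inl_mul', inl_mul']
    apply hone; funext i; fin_cases i <;> simp
  · simp only [_root_.map_mul, map_inv, map_pow, ha, hb, hc]
    rw [mul_assoc (SemidirectProduct.inr _), ← mul_assoc (SemidirectProduct.inr _),
      conjG A hA]
    have hmv : Matrix.mulVec !![3,1;-2,-1] ![-1, 4] = ![1, -2] := by
      funext i; fin_cases i <;>
        simp [Matrix.mulVec, dotProduct, Fin.sum_univ_two]
    rw [hmv, pow_two, inl_mul', inl_mul', inl_inv', inl_mul']
    apply hone; funext i; fin_cases i <;> simp
  · simp only [_root_.map_mul, map_inv, map_pow, ha, hb, hc]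
    rw [inl_inv']
    rw [mul_assoc (SemidirectProduct.inr _), ← mul_assoc (SemidirectProduct.inr _),
      conjG A hA]
    have hmv : Matrix.mulVec !![3,1;-2,-1] (-![0, 1]) = ![-1, 1] := by
      funext i; fin_cases i <;>
        simp [Matrix.mulVec, dotProduct, Fin.sum_univ_two]
    rw [hmv, pow_succ, pow_two, inl_mul', inl_mul', inl_mul', inl_inv', inl_mul']
    apply hone; funext i; fin_cases i <;> simp

/-- the homomorphism from `P` to the semidirect product. -/
noncomputable def fHom (hA : (A : Matrix (Fin 2) (Fin 2) ℤ) = !![3, 1; -2, -1]) :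
    P →* Gsd A :=
  PresentedGroup.toGroup (lift_rels A hA)

lemma left_id (hA : (A : Matrix (Fin 2) (Fin 2) ℤ) = !![3, 1; -2, -1]) :
    (gHom A hA).comp (fHom A hA) = MonoidHom.id P := by
  apply PresentedGroup.ext
  intro i
  rw [MonoidHom.comp_apply, MonoidHom.id_apply]
  fin_cases i
  · show gHom A hA (fHom A hA (PresentedGroup.of 0)) = X
    rw [fHom, PresentedGroup.toGroup.of]
    show SemidirectProduct.lift F1 F2 _ (SemidirectProduct.inl _) = X
    rw [SemidirectProduct.lift_inl, F1_ofAdd]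
    norm_num
  · show gHom A hA (fHom A hA (PresentedGroup.of 1)) = B
    rw [fHom, PresentedGroup.toGroup.of]
    show SemidirectProduct.lift F1 F2 _ (SemidirectProduct.inr _) = B
    rw [SemidirectProduct.lift_inr]
    show B ^ (1:ℤ) = B
    rw [zpow_one]
  · show gHom A hA (fHom A hA (PresentedGroup.of 2)) = Y
    rw [fHom, PresentedGroup.toGroup.of]
    show SemidirectProduct.lift F1 F2 _ (SemidirectProduct.inl _) = Y
    rw [SemidirectProduct.lift_inl, F1_ofAdd]
    norm_num

lemma right_id (hA : (A : Matrix (Fin 2) (Fin 2) ℤ) = !![3, 1; -2, -1]) :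
    (fHom A hA).comp (gHom A hA) = MonoidHom.id (Gsd A) := by
  apply SemidirectProduct.hom_ext
  · refine MonoidHom.ext fun x => ?_
    rw [MonoidHom.comp_apply, MonoidHom.comp_apply, MonoidHom.comp_apply,
      MonoidHom.id_apply]
    show fHom A hA (gHom A hA (SemidirectProduct.inl x)) = SemidirectProduct.inl x
    rw [gHom, SemidirectProduct.lift_inl]
    have hFx : F1 x = X ^ (4 * Multiplicative.toAdd x 0 + Multiplicative.toAdd x 1) *
        Y ^ (-(Multiplicative.toAdd x 0)) := rfl
    have hX : fHom A hA X = SemidirectProduct.inl (Multiplicative.ofAdd ![0, 1]) := by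
      rw [fHom]; exact PresentedGroup.toGroup.of (lift_rels A hA)
    have hY : fHom A hA Y = SemidirectProduct.inl (Multiplicative.ofAdd ![-1, 4]) := by
      rw [fHom]; exact PresentedGroup.toGroup.of (lift_rels A hA)
    rw [hFx, _root_.map_mul, map_zpow, map_zpow, hX, hY, inl_zpow', inl_zpow', inl_mul']
    have hv : (4 * Multiplicative.toAdd x 0 + Multiplicative.toAdd x 1) • ![(0:ℤ), 1] +
        (-(Multiplicative.toAdd x 0)) • ![(-1:ℤ), 4] = Multiplicative.toAdd x := by
      funext i; fin_cases i <;> simp <;> ring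
    rw [hv, ofAdd_toAdd]
  · refine MonoidHom.ext fun g => ?_
    rw [MonoidHom.comp_apply, MonoidHom.comp_apply, MonoidHom.comp_apply,
      MonoidHom.id_apply]
    show fHom A hA (gHom A hA (SemidirectProduct.inr g)) = SemidirectProduct.inr g
    rw [gHom, SemidirectProduct.lift_inr]
    show fHom A hA (B ^ Multiplicative.toAdd g) = SemidirectProduct.inr g
    have hB : fHom A hA B = SemidirectProduct.inr (Multiplicative.ofAdd (1:ℤ)) := by
      rw [fHom]; exact PresentedGroup.toGroup.of (lift_rels A hA)
    rw [map_zpow, hB, ← map_zpow, ← ofAdd_zsmul]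
    simp

end WithA

/-- The presented group is isomorphic to the semidirect product given by
the matrix [[3,1],[-2,-1]]. -/
theorem presented_iso_semidirect (A : GL (Fin 2) ℤ)
    (hA : (A : Matrix (Fin 2) (Fin 2) ℤ) = !![3, 1; -2, -1]) :
    Nonempty (PresentedGroup rels ≃* ZSemidirect A) :=
  ⟨MonoidHom.toMulEquiv (fHom A hA) (gHom A hA) (left_id A hA) (right_id A hA)⟩

end Stmt9
end

section
/- The abelianization of the group presented by ⟨a,b,c,d,e ∣ a⁻¹bd⁻¹ec, c⁻¹db, d⁻¹ae⁻¹, a⁻¹ec⁻¹d, d⁻¹b⁻¹c⟩ is isomorphic to ℤ ⊕ ℤ/3ℤ. -/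
namespace Stmt13

def a : FreeGroup (Fin 5) := FreeGroup.of 0
def b : FreeGroup (Fin 5) := FreeGroup.of 1
def c : FreeGroup (Fin 5) := FreeGroup.of 2
def d : FreeGroup (Fin 5) := FreeGroup.of 3
def e : FreeGroup (Fin 5) := FreeGroup.of 4

/-- the relators of the presentation -/
def rels : Set (FreeGroup (Fin 5)) :=
  {a⁻¹ * b * d⁻¹ * e * c, c⁻¹ * d * b, d⁻¹ * a * e⁻¹, a⁻¹ * e * c⁻¹ * d, d⁻¹ * b⁻¹ * c}

abbrev T := Multiplicative (ℤ × ZMod 3)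

/-- images of the generators in the target -/
def gen : Fin 5 → T :=
  ![Multiplicative.ofAdd (1, -1), Multiplicative.ofAdd (0, 1), Multiplicative.ofAdd (0, 0),
    Multiplicative.ofAdd (0, -1), Multiplicative.ofAdd (1, 0)]

lemma gen_rels : ∀ r ∈ rels, FreeGroup.lift gen r = 1 := by
  intro r hr
  simp only [rels, Set.mem_insert_iff, Set.mem_singleton_iff] at hr
  rcases hr with rfl | rfl | rfl | rfl | rfl <;>
    simp only [a, b, c, d, e, map_mul, map_inv, FreeGroup.lift_apply_of, gen] <;> decide

abbrev G := PresentedGroup rels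
abbrev Ab := Abelianization G

/-- the composite map from the free group to the abelianization -/
def φ : FreeGroup (Fin 5) →* Ab :=
  Abelianization.of.comp (QuotientGroup.mk' (Subgroup.normalClosure rels))

lemma rel_one (r : FreeGroup (Fin 5)) (hr : r ∈ rels) : φ r = 1 := by
  have h : (QuotientGroup.mk' (Subgroup.normalClosure rels)) r = 1 := by
    rw [QuotientGroup.mk'_apply, QuotientGroup.eq_one_iff]
    exact Subgroup.subset_normalClosure hr
  show Abelianization.of ((QuotientGroup.mk' (Subgroup.normalClosure rels)) r) = 1
  rw [h, map_one]

noncomputable def A : Ab := φ a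
noncomputable def B : Ab := φ b
noncomputable def C : Ab := φ c
noncomputable def D : Ab := φ d
noncomputable def E : Ab := φ e

lemma hA : A = E * B⁻¹ ∧ C = 1 ∧ D = B⁻¹ ∧ B ^ 3 = 1 := by
  have h1 : A⁻¹ * B * D⁻¹ * E * C = 1 := by
    have := rel_one (a⁻¹ * b * d⁻¹ * e * c) (by left; rfl)
    simpa only [map_mul, map_inv, A, B, C, D, E] using this
  have h2 : C⁻¹ * D * B = 1 := by
    have := rel_one (c⁻¹ * d * b) (by right; left; rfl)
    simpa only [map_mul, map_inv, A, B, C, D, E] using this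
  have h3 : D⁻¹ * A * E⁻¹ = 1 := by
    have := rel_one (d⁻¹ * a * e⁻¹) (by right; right; left; rfl)
    simpa only [map_mul, map_inv, A, B, C, D, E] using this
  have h4 : A⁻¹ * E * C⁻¹ * D = 1 := by
    have := rel_one (a⁻¹ * e * c⁻¹ * d) (by right; right; right; left; rfl)
    simpa only [map_mul, map_inv, A, B, C, D, E] using this
  have e2 : C = D * B := by
    rw [mul_assoc, inv_mul_eq_one] at h2; exact h2
  have e3 : A = D * E := by
    rw [mul_inv_eq_one, inv_mul_eq_iff_eq_mul] at h3; exact h3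
  have e4 : A = E * B⁻¹ := by
    rw [mul_assoc, mul_assoc, inv_mul_eq_one] at h4
    rw [h4, e2]
    group
  have hD : D = B⁻¹ := by
    have h := e3.symm.trans e4
    have h' := eq_mul_inv_of_mul_eq h
    rwa [mul_comm E B⁻¹, mul_assoc, mul_inv_cancel, mul_one] at h'
  have hC : C = 1 := by rw [e2, hD, inv_mul_cancel]
  have hB3 : B ^ 3 = 1 := by
    rw [e4, hD, hC] at h1
    have h1'' : B * E⁻¹ * B * B * E = 1 := by
      rw [show B * E⁻¹ * B * B * E = (E * B⁻¹)⁻¹ * B * (B⁻¹)⁻¹ * E * 1 by group]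
      exact h1
    have step : E⁻¹ * B ^ 3 * E = 1 := by
      have hcomm : E⁻¹ * B ^ 3 * E = B * E⁻¹ * B * B * E := by
        rw [mul_comm B E⁻¹, pow_succ, pow_two]
        simp [mul_assoc]
      rw [hcomm]; exact h1''
    have : B ^ 3 = E * (E⁻¹ * B ^ 3 * E) * E⁻¹ := by group
    rw [this, step, mul_one, mul_inv_cancel]
  exact ⟨e4, hC, hD, hB3⟩

noncomputable def fwd : Ab →* T := Abelianization.lift (PresentedGroup.toGroup gen_rels)

lemma smul3 : (zmultiplesHom (Additive Ab) (Additive.ofMul B)) ((3 : ℕ) : ℤ) = 0 := by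
  rw [zmultiplesHom_apply, ← ofMul_zpow, zpow_natCast, hA.2.2.2]
  rfl

noncomputable def bwdAdd : ℤ × ZMod 3 →+ Additive Ab :=
  ((zmultiplesHom (Additive Ab)) (Additive.ofMul E)).comp (AddMonoidHom.fst _ _) +
    (ZMod.lift 3 ⟨(zmultiplesHom (Additive Ab)) (Additive.ofMul B), smul3⟩).comp
      (AddMonoidHom.snd _ _)

noncomputable def bwd : T →* Ab := AddMonoidHom.toMultiplicativeLeft bwdAdd

lemma bwd_apply (m k : ℤ) :
    bwd (Multiplicative.ofAdd (m, ((k : ℤ) : ZMod 3))) = E ^ m * B ^ k := by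
  show (bwdAdd ((m, ((k : ℤ) : ZMod 3)) : ℤ × ZMod 3)).toMul = E ^ m * B ^ k
  simp only [bwdAdd, AddMonoidHom.add_apply, AddMonoidHom.coe_comp, Function.comp_apply,
    AddMonoidHom.coe_fst, AddMonoidHom.coe_snd, ZMod.lift_coe, zmultiplesHom_apply,
    toMul_add, toMul_zsmul, toMul_ofMul]

lemma φ_eq (i : Fin 5) : φ (FreeGroup.of i) = Abelianization.of (PresentedGroup.of i) := rfl

lemma fwd_of (j : Fin 5) : fwd (Abelianization.of (PresentedGroup.of j)) = gen j := by
  simp [fwd, PresentedGroup.toGroup.of]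

lemma bwd_gen0 : bwd (gen 0) = Abelianization.of (PresentedGroup.of (0 : Fin 5)) := by
  rw [show gen 0 = Multiplicative.ofAdd ((1 : ℤ), ((-1 : ℤ) : ZMod 3)) from by norm_num [gen],
    bwd_apply 1 (-1), zpow_one, zpow_neg_one]
  exact hA.1.symm

lemma bwd_gen1 : bwd (gen 1) = Abelianization.of (PresentedGroup.of (1 : Fin 5)) := by
  rw [show gen 1 = Multiplicative.ofAdd ((0 : ℤ), ((1 : ℤ) : ZMod 3)) from by norm_num [gen],
    bwd_apply 0 1, zpow_zero, zpow_one, one_mul]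
  rfl

lemma bwd_gen2 : bwd (gen 2) = Abelianization.of (PresentedGroup.of (2 : Fin 5)) := by
  rw [show gen 2 = Multiplicative.ofAdd ((0 : ℤ), ((0 : ℤ) : ZMod 3)) from by decide,
    bwd_apply 0 0, zpow_zero, zpow_zero, one_mul]
  exact hA.2.1.symm

lemma bwd_gen3 : bwd (gen 3) = Abelianization.of (PresentedGroup.of (3 : Fin 5)) := by
  rw [show gen 3 = Multiplicative.ofAdd ((0 : ℤ), ((-1 : ℤ) : ZMod 3)) from by decide,
    bwd_apply 0 (-1), zpow_zero, zpow_neg_one, one_mul]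
  exact hA.2.2.1.symm

lemma bwd_gen4 : bwd (gen 4) = Abelianization.of (PresentedGroup.of (4 : Fin 5)) := by
  rw [show gen 4 = Multiplicative.ofAdd ((1 : ℤ), ((0 : ℤ) : ZMod 3)) from by decide,
    bwd_apply 1 0, zpow_one, zpow_zero, mul_one]
  rfl

/-- The abelianization of the presented group. -/
theorem abelianization_presented :
    Nonempty (Abelianization (PresentedGroup rels) ≃* Multiplicative (ℤ × ZMod 3)) := by
  refine ⟨MonoidHom.toMulEquiv fwd bwd ?_ ?_⟩
  · apply Abelianization.hom_ext
    apply PresentedGroup.ext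
    intro i
    fin_cases i
    · show bwd (fwd (Abelianization.of (PresentedGroup.of (0 : Fin 5)))) =
        Abelianization.of (PresentedGroup.of (0 : Fin 5))
      rw [fwd_of]; exact bwd_gen0
    · show bwd (fwd (Abelianization.of (PresentedGroup.of (1 : Fin 5)))) =
        Abelianization.of (PresentedGroup.of (1 : Fin 5))
      rw [fwd_of]; exact bwd_gen1
    · show bwd (fwd (Abelianization.of (PresentedGroup.of (2 : Fin 5)))) =
        Abelianization.of (PresentedGroup.of (2 : Fin 5))
      rw [fwd_of]; exact bwd_gen2
    · show bwd (fwd (Abelianization.of (PresentedGroup.of (3 : Fin 5)))) =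
        Abelianization.of (PresentedGroup.of (3 : Fin 5))
      rw [fwd_of]; exact bwd_gen3
    · show bwd (fwd (Abelianization.of (PresentedGroup.of (4 : Fin 5)))) =
        Abelianization.of (PresentedGroup.of (4 : Fin 5))
      rw [fwd_of]; exact bwd_gen4
  · refine MonoidHom.ext fun x => ?_
    obtain ⟨m, z⟩ := x
    obtain ⟨k, rfl⟩ := ZMod.intCast_surjective z
    have hx : (Multiplicative.ofAdd ((m, ((k : ℤ) : ZMod 3)) : ℤ × ZMod 3)) =
        (Multiplicative.ofAdd ((1, 0) : ℤ × ZMod 3)) ^ m *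
          (Multiplicative.ofAdd ((0, ((1 : ℤ) : ZMod 3)) : ℤ × ZMod 3)) ^ k := by
      rw [← ofAdd_zsmul, ← ofAdd_zsmul, ← ofAdd_add]
      congr 1
      simp [Prod.ext_iff, ← Int.cast_smul_eq_zsmul]
    show (fwd.comp bwd) (Multiplicative.ofAdd ((m, ((k : ℤ) : ZMod 3)) : ℤ × ZMod 3)) = _
    rw [hx, map_mul, map_zpow, map_zpow]
    have hE : (fwd.comp bwd) (Multiplicative.ofAdd ((1, 0) : ℤ × ZMod 3)) =
        Multiplicative.ofAdd ((1, 0) : ℤ × ZMod 3) := by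
      have h0 : (Multiplicative.ofAdd ((1, 0) : ℤ × ZMod 3)) =
          Multiplicative.ofAdd ((1, ((0 : ℤ) : ZMod 3)) : ℤ × ZMod 3) := by norm_num
      rw [MonoidHom.comp_apply, h0, bwd_apply 1 0]
      simp only [zpow_one, zpow_zero, mul_one]
      show fwd (Abelianization.of (PresentedGroup.of 4)) = _
      simp [fwd, PresentedGroup.toGroup.of, gen]
    have hB : (fwd.comp bwd) (Multiplicative.ofAdd ((0, ((1 : ℤ) : ZMod 3)) : ℤ × ZMod 3)) =
        Multiplicative.ofAdd ((0, ((1 : ℤ) : ZMod 3)) : ℤ × ZMod 3) := by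
      rw [MonoidHom.comp_apply, bwd_apply 0 1]
      simp only [zpow_one, zpow_zero, one_mul]
      show fwd (Abelianization.of (PresentedGroup.of 1)) = _
      simp [fwd, PresentedGroup.toGroup.of, gen]
    rw [hE, hB, ← hx]
    rfl

end Stmt13
end
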